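/- Assume there exists at least one supersolution w* of the discrete HJB equation (T(w*) ≤ w* pointwise). With v_1 = f ∘ g^δ and v_{l+1} = T(v_l), the pointwise limit w_0(m) := lim_{l→∞} v_l(m) exists and is finite for every m ∈ ℕ_0^n, satisfies T(w_0) = w_0 (i.e. w_0 is a solution of the discrete HJB equation), and satisfies w_0 ≤ w for every supersolution w of the discrete HJB equation; that is, w_0 is the smallest supersolution of the discrete HJB equation. -/

import Mathlib

open MeasureTheory Filter

noncomputable section

/-- The grid point associated with a multi-index `m`: `g^δ(m) = (p₁ δ m₁, …, pₙ δ mₙ)`. -/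
def gdel (n : ℕ) (p : Fin n → ℝ) (δ : ℝ) (m : Fin n → ℕ) : Fin n → ℝ :=
  fun i => p i * δ * (m i : ℝ)

/-- The index of the closest grid point below `x`: `ρ^δ(x) = (⌊xᵢ/(δ pᵢ)⌋)ᵢ`. -/
def rho (n : ℕ) (p : Fin n → ℝ) (δ : ℝ) (x : Fin n → ℝ) : Fin n → ℕ :=
  fun i => ⌊x i / (δ * p i)⌋₊

/-- The closest grid point below `x`: `⟨x⟩^δ = g^δ(ρ^δ(x))`. -/
def proj (n : ℕ) (p : Fin n → ℝ) (δ : ℝ) (x : Fin n → ℝ) : Fin n → ℝ :=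
  gdel n p δ (rho n p δ x)

/-- `R(x) = λ ∫_{x - α ∉ ℝ₊ⁿ} υ(x,α) dF(α)`. -/
def Rpen (n : ℕ) (lam : ℝ) (F : Measure (Fin n → ℝ))
    (υ : (Fin n → ℝ) → (Fin n → ℝ) → ℝ) (x : Fin n → ℝ) : ℝ :=
  lam * ∫ α in {α : Fin n → ℝ | ¬ 0 ≤ x - α}, υ x α ∂F

/-- The discrete integral operator `I^δ`. -/
def Idel (n : ℕ) (p a : Fin n → ℝ) (lam c δ : ℝ) (F : Measure (Fin n → ℝ))
    (w : (Fin n → ℕ) → ℝ) (m : Fin n → ℕ) : ℝ :=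
  ∫ t in (0:ℝ)..δ, lam * Real.exp (-(c + lam) * t) *
    ∫ α in {α : Fin n → ℝ | α ≤ gdel n p δ m + t • p},
      (w (rho n p δ (gdel n p δ m + t • p - α)) +
        ∑ i, a i * ((gdel n p δ m + t • p - α) i
          - proj n p δ (gdel n p δ m + t • p - α) i)) ∂F

/-- The no-dividend operator `T₀`. -/
def T0 (n : ℕ) (p a : Fin n → ℝ) (lam c δ : ℝ) (F : Measure (Fin n → ℝ))
    (υ : (Fin n → ℝ) → (Fin n → ℝ) → ℝ) (w : (Fin n → ℕ) → ℝ) (m : Fin n → ℕ) : ℝ :=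
  w (m + 1) * Real.exp (-(c + lam) * δ) + Idel n p a lam c δ F w m
    - ∫ t in (0:ℝ)..δ, Real.exp (-(c + lam) * t) * Rpen n lam F υ (gdel n p δ m + t • p)

/-- The dividend-payment operator `Tᵢ` of company `i` (requires `m i > 0`). -/
def Ti (n : ℕ) (p a : Fin n → ℝ) (δ : ℝ) (i : Fin n) (w : (Fin n → ℕ) → ℝ)
    (m : Fin n → ℕ) : ℝ :=
  w (m - Pi.single i 1) + δ * a i * p i

/-- The switch operator `Tₛ`. -/
def Ts (n : ℕ) (p : Fin n → ℝ) (δ : ℝ) (f : (Fin n → ℝ) → ℝ) (w : (Fin n → ℕ) → ℝ)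
    (m : Fin n → ℕ) : ℝ :=
  f (gdel n p δ m)

/-- The Bellman operator `T = max{T₀, (Tᵢ over i with mᵢ>0), Tₛ}`. -/
def Tbell (n : ℕ) (p a : Fin n → ℝ) (lam c δ : ℝ) (F : Measure (Fin n → ℝ))
    (υ : (Fin n → ℝ) → (Fin n → ℝ) → ℝ) (f : (Fin n → ℝ) → ℝ)
    (w : (Fin n → ℕ) → ℝ) (m : Fin n → ℕ) : ℝ :=
  sSup ({T0 n p a lam c δ F υ w m, Ts n p δ f w m} ∪
    (fun i => Ti n p a δ i w m) '' {i | 0 < m i})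


section Aux
variable {n : ℕ} {p a : Fin n → ℝ} {lam c δ : ℝ}

/-- index window -/
def Kset (n : ℕ) (m : Fin n → ℕ) : Finset (Fin n → ℕ) :=
  Fintype.piFinset fun i => Finset.range (m i + 2)

lemma Kset_nonempty (m : Fin n → ℕ) : (Kset n m).Nonempty :=
  ⟨fun _ => 0, by simp [Kset]⟩

lemma rho_mem_Kset (hp : ∀ i, 0 < p i) (hδ : 0 < δ) (m : Fin n → ℕ) {t : ℝ}
    (ht : t ∈ Set.Icc 0 δ) {α : Fin n → ℝ} (hα : 0 ≤ α) :
    rho n p δ (gdel n p δ m + t • p - α) ∈ Kset n m := by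
  rw [Kset, Fintype.mem_piFinset]
  intro i
  rw [Finset.mem_range, Nat.lt_succ_iff]
  have hd : 0 < δ * p i := mul_pos hδ (hp i)
  have hx : (gdel n p δ m + t • p - α) i ≤ δ * p i * (m i + 1) := by
    have hαi : (0:ℝ) ≤ α i := by have := hα i; simpa using this
    simp only [Pi.add_apply, Pi.sub_apply, Pi.smul_apply, smul_eq_mul, gdel]
    have htp : t * p i ≤ δ * p i := mul_le_mul_of_nonneg_right ht.2 (hp i).le
    nlinarith
  calc rho n p δ (gdel n p δ m + t • p - α) i
      = ⌊(gdel n p δ m + t • p - α) i / (δ * p i)⌋₊ := rfl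
    _ ≤ ⌊((m i + 1 : ℕ) : ℝ)⌋₊ := by
        apply Nat.floor_le_floor
        rw [div_le_iff₀ hd] at *
        push_cast
        linarith [hx]
    _ = m i + 1 := Nat.floor_natCast _

lemma frac_bounds (hp : ∀ i, 0 < p i) (hδ : 0 < δ) {x : Fin n → ℝ} (hx : 0 ≤ x) (i : Fin n) :
    0 ≤ x i - proj n p δ x i ∧ x i - proj n p δ x i ≤ δ * p i := by
  have hd : 0 < δ * p i := mul_pos hδ (hp i)
  have h1 : (⌊x i / (δ * p i)⌋₊ : ℝ) ≤ x i / (δ * p i) := Nat.floor_le (div_nonneg (hx i) hd.le)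
  have h2 : x i / (δ * p i) < ⌊x i / (δ * p i)⌋₊ + 1 := Nat.lt_floor_add_one _
  rw [le_div_iff₀ hd] at h1
  rw [div_lt_iff₀ hd] at h2
  constructor
  · simp only [proj, gdel, rho]
    nlinarith
  · simp only [proj, gdel, rho]
    nlinarith

lemma abs_sum_frac_le (hp : ∀ i, 0 < p i) (ha : ∀ i, 0 < a i) (hδ : 0 < δ)
    {x : Fin n → ℝ} (hx : 0 ≤ x) :
    |∑ i, a i * (x i - proj n p δ x i)| ≤ ∑ i, a i * (δ * p i) := by
  calc |∑ i, a i * (x i - proj n p δ x i)| ≤ ∑ i, |a i * (x i - proj n p δ x i)| :=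
        Finset.abs_sum_le_sum_abs _ _
    _ ≤ ∑ i, a i * (δ * p i) := by
        apply Finset.sum_le_sum
        intro i _
        obtain ⟨h1, h2⟩ := frac_bounds hp hδ hx i
        rw [abs_mul, abs_of_pos (ha i), abs_of_nonneg h1]
        exact mul_le_mul_of_nonneg_left h2 (ha i).le

end Aux

section Meas
variable {n : ℕ} (p a : Fin n → ℝ) (δ : ℝ) (F : Measure (Fin n → ℝ))

def bodyf (w : (Fin n → ℕ) → ℝ) (m : Fin n → ℕ) (t : ℝ) (α : Fin n → ℝ) : ℝ :=
  w (rho n p δ (gdel n p δ m + t • p - α)) +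
    ∑ i, a i * ((gdel n p δ m + t • p - α) i - proj n p δ (gdel n p δ m + t • p - α) i)

def Inn (w : (Fin n → ℕ) → ℝ) (m : Fin n → ℕ) (t : ℝ) : ℝ :=
  ∫ α in {α : Fin n → ℝ | α ≤ gdel n p δ m + t • p}, bodyf p a δ w m t α ∂F

lemma Idel_eq (lam c : ℝ) (w : (Fin n → ℕ) → ℝ) (m : Fin n → ℕ) :
    Idel n p a lam c δ F w m
      = ∫ t in (0:ℝ)..δ, lam * Real.exp (-(c + lam) * t) * Inn p a δ F w m t := rfl

lemma measurable_rho : Measurable (rho n p δ) :=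
  measurable_pi_lambda _ fun i =>
    Nat.measurable_floor.comp ((measurable_pi_apply i).div_const _)

lemma measurable_w_rho (w : (Fin n → ℕ) → ℝ) :
    Measurable fun x => w (rho n p δ x) :=
  (measurable_of_countable w).comp (measurable_rho p δ)

def Sprod (m : Fin n → ℕ) : Set (ℝ × (Fin n → ℝ)) :=
  {q | q.2 ≤ gdel n p δ m + q.1 • p}

lemma measurableSet_Sprod (m : Fin n → ℕ) : MeasurableSet (Sprod p δ m) := by
  have : Sprod p δ m = ⋂ i, {q : ℝ × (Fin n → ℝ) | q.2 i ≤ gdel n p δ m i + q.1 * p i} := by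
    ext q; simp [Sprod, Pi.le_def]
  rw [this]
  exact MeasurableSet.iInter fun i =>
    measurableSet_le (measurable_snd.eval) (by fun_prop)

lemma measurableSet_slice (m : Fin n → ℕ) (t : ℝ) :
    MeasurableSet {α : Fin n → ℝ | α ≤ gdel n p δ m + t • p} :=
  (measurableSet_Sprod p δ m).preimage (measurable_prodMk_left (x := t))

lemma measurable_Xq (m : Fin n → ℕ) :
    Measurable fun q : ℝ × (Fin n → ℝ) => gdel n p δ m + q.1 • p - q.2 := by
  have : Continuous fun q : ℝ × (Fin n → ℝ) => gdel n p δ m + q.1 • p - q.2 := by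
    fun_prop
  exact this.measurable

lemma measurable_bodyq (w : (Fin n → ℕ) → ℝ) (m : Fin n → ℕ) :
    Measurable fun q : ℝ × (Fin n → ℝ) => bodyf p a δ w m q.1 q.2 := by
  apply Measurable.add
  · exact (measurable_w_rho p δ w).comp (measurable_Xq p δ m)
  · apply Finset.measurable_sum
    intro i _
    apply Measurable.const_mul
    apply Measurable.sub
    · exact (measurable_pi_apply i).comp (measurable_Xq p δ m)
    · have : Measurable fun x : Fin n → ℝ => proj n p δ x i := by
        have : Measurable fun x : Fin n → ℝ => ((rho n p δ x i : ℕ) : ℝ) :=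
          (measurable_from_top (f := (Nat.cast : ℕ → ℝ))).comp
            ((measurable_pi_apply i).comp (measurable_rho p δ))
        simpa [proj, gdel] using this.const_mul (p i * δ)
      exact this.comp (measurable_Xq p δ m)

lemma Inn_eq_indicator (w : (Fin n → ℕ) → ℝ) (m : Fin n → ℕ) (t : ℝ) :
    Inn p a δ F w m t
      = ∫ α, (Sprod p δ m).indicator (fun q => bodyf p a δ w m q.1 q.2) (t, α) ∂F := by
  rw [Inn, ← integral_indicator (measurableSet_slice p δ m t)]
  rfl

lemma measurable_Inn [SFinite F] (w : (Fin n → ℕ) → ℝ) (m : Fin n → ℕ) :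
    Measurable fun t => Inn p a δ F w m t := by
  have hG : StronglyMeasurable
      ((Sprod p δ m).indicator (fun q => bodyf p a δ w m q.1 q.2)) :=
    ((measurable_bodyq p a δ w m).indicator (measurableSet_Sprod p δ m)).stronglyMeasurable
  have := hG.integral_prod_right' (ν := F)
  simp only [← Inn_eq_indicator p a δ F w m] at this
  exact this.measurable

end Meas

section Bounds
variable {n : ℕ} {p a : Fin n → ℝ} {lam c δ : ℝ} {F : Measure (Fin n → ℝ)}

/-- bound for the fractional-part sum -/
def Ca (n : ℕ) (p a : Fin n → ℝ) (δ : ℝ) : ℝ := ∑ i, a i * (δ * p i)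

lemma Ca_nonneg (hp : ∀ i, 0 < p i) (ha : ∀ i, 0 < a i) (hδ : 0 < δ) :
    0 ≤ Ca n p a δ :=
  Finset.sum_nonneg fun i _ => le_of_lt (mul_pos (ha i) (mul_pos hδ (hp i)))

lemma ae_nonneg (hFpos : F {α | ¬ 0 ≤ α} = 0) : ∀ᵐ α ∂F, 0 ≤ α := by
  rw [ae_iff]; exact hFpos

lemma body_le (hp : ∀ i, 0 < p i) (ha : ∀ i, 0 < a i) (hδ : 0 < δ)
    {w : (Fin n → ℕ) → ℝ} {m : Fin n → ℕ} {B : ℝ}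
    (hb : ∀ k ∈ Kset n m, |w k| ≤ B) {t : ℝ} (ht : t ∈ Set.Icc 0 δ)
    {α : Fin n → ℝ} (hα : 0 ≤ α) (hmem : α ≤ gdel n p δ m + t • p) :
    ‖bodyf p a δ w m t α‖ ≤ B + Ca n p a δ := by
  have hx : 0 ≤ gdel n p δ m + t • p - α := sub_nonneg.2 hmem
  have h1 : |w (rho n p δ (gdel n p δ m + t • p - α))| ≤ B :=
    hb _ (rho_mem_Kset hp hδ m ht hα)
  have h2 := abs_sum_frac_le hp ha hδ hx
  calc ‖bodyf p a δ w m t α‖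
      ≤ |w (rho n p δ (gdel n p δ m + t • p - α))|
        + |∑ i, a i * ((gdel n p δ m + t • p - α) i
            - proj n p δ (gdel n p δ m + t • p - α) i)| := abs_add_le _ _
    _ ≤ B + Ca n p a δ := add_le_add h1 h2

lemma integrable_body [IsProbabilityMeasure F]
    (hp : ∀ i, 0 < p i) (ha : ∀ i, 0 < a i) (hδ : 0 < δ)
    (hFpos : F {α | ¬ 0 ≤ α} = 0)
    {w : (Fin n → ℕ) → ℝ} {m : Fin n → ℕ} {B : ℝ}
    (hb : ∀ k ∈ Kset n m, |w k| ≤ B) {t : ℝ} (ht : t ∈ Set.Icc 0 δ) :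
    Integrable (bodyf p a δ w m t)
      (F.restrict {α : Fin n → ℝ | α ≤ gdel n p δ m + t • p}) := by
  apply Integrable.mono' (integrable_const (B + Ca n p a δ))
  · exact (((measurable_bodyq p a δ w m).comp
      (measurable_prodMk_left (x := t)))).aestronglyMeasurable
  · filter_upwards [ae_restrict_of_ae (ae_nonneg hFpos),
      ae_restrict_mem (measurableSet_slice p δ m t)] with α h1 h2
    exact body_le hp ha hδ hb ht h1 h2

lemma abs_Inn_le [IsProbabilityMeasure F]
    (hp : ∀ i, 0 < p i) (ha : ∀ i, 0 < a i) (hδ : 0 < δ)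
    (hFpos : F {α | ¬ 0 ≤ α} = 0)
    {w : (Fin n → ℕ) → ℝ} {m : Fin n → ℕ} {B : ℝ} (hB : 0 ≤ B)
    (hb : ∀ k ∈ Kset n m, |w k| ≤ B) {t : ℝ} (ht : t ∈ Set.Icc 0 δ) :
    |Inn p a δ F w m t| ≤ B + Ca n p a δ := by
  have hbd : ∀ᵐ α ∂(F.restrict {α : Fin n → ℝ | α ≤ gdel n p δ m + t • p}),
      ‖bodyf p a δ w m t α‖ ≤ B + Ca n p a δ := by
    filter_upwards [ae_restrict_of_ae (ae_nonneg hFpos),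
      ae_restrict_mem (measurableSet_slice p δ m t)] with α h1 h2
    exact body_le hp ha hδ hb ht h1 h2
  have := norm_integral_le_of_norm_le_const hbd
    (f := bodyf p a δ w m t)
  refine le_trans this ?_
  have h1 : ((F.restrict {α : Fin n → ℝ | α ≤ gdel n p δ m + t • p}) Set.univ).toReal ≤ 1 := by
    rw [Measure.restrict_apply_univ]
    exact ENNReal.toReal_le_of_le_ofReal one_pos.le (by simpa using prob_le_one)
  have h0 : 0 ≤ B + Ca n p a δ := add_nonneg hB (Ca_nonneg hp ha hδ)
  nlinarith [show (F.restrict {α : Fin n → ℝ | α ≤ gdel n p δ m + t • p}).real Set.univ ≤ 1 from h1]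

lemma Inn_mono [IsProbabilityMeasure F]
    (hp : ∀ i, 0 < p i) (ha : ∀ i, 0 < a i) (hδ : 0 < δ)
    (hFpos : F {α | ¬ 0 ≤ α} = 0)
    {w w' : (Fin n → ℕ) → ℝ} (h : ∀ k, w k ≤ w' k) (m : Fin n → ℕ)
    {t : ℝ} (ht : t ∈ Set.Icc 0 δ) :
    Inn p a δ F w m t ≤ Inn p a δ F w' m t := by
  have hw := integrable_body (F := F) hp ha hδ hFpos
    (w := w) (m := m) (B := (Kset n m).sup' (Kset_nonempty m) fun k => |w k|)
    (fun k hk => Finset.le_sup' (fun k => |w k|) hk) ht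
  have hw' := integrable_body (F := F) hp ha hδ hFpos
    (w := w') (m := m) (B := (Kset n m).sup' (Kset_nonempty m) fun k => |w' k|)
    (fun k hk => Finset.le_sup' (fun k => |w' k|) hk) ht
  exact integral_mono hw hw' fun α => add_le_add_left (h _) _

end Bounds

section Outer
variable {n : ℕ} {p a : Fin n → ℝ} {lam c δ : ℝ} {F : Measure (Fin n → ℝ)}

lemma outer_intervalIntegrable [IsProbabilityMeasure F]
    (hp : ∀ i, 0 < p i) (ha : ∀ i, 0 < a i)
    (hlam : 0 < lam) (hc : 0 < c) (hδ : 0 < δ)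
    (hFpos : F {α | ¬ 0 ≤ α} = 0)
    {w : (Fin n → ℕ) → ℝ} {m : Fin n → ℕ} {B : ℝ} (hB : 0 ≤ B)
    (hb : ∀ k ∈ Kset n m, |w k| ≤ B) :
    IntervalIntegrable (fun t => lam * Real.exp (-(c + lam) * t) * Inn p a δ F w m t)
      MeasureTheory.volume 0 δ := by
  rw [intervalIntegrable_iff, Set.uIoc_of_le hδ.le]
  haveI : IsFiniteMeasure (MeasureTheory.volume.restrict (Set.Ioc (0:ℝ) δ)) :=
    ⟨by rw [Measure.restrict_apply_univ]; simp [Real.volume_Ioc]⟩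
  apply Integrable.mono' (integrable_const (lam * (B + Ca n p a δ)))
  · exact (((measurable_const.mul
      ((Real.measurable_exp.comp (measurable_id.const_mul _)))).mul
      (measurable_Inn p a δ F w m))).aestronglyMeasurable
  · filter_upwards [ae_restrict_mem measurableSet_Ioc] with t ht
    have ht' : t ∈ Set.Icc 0 δ := ⟨ht.1.le, ht.2⟩
    have hexp : Real.exp (-(c + lam) * t) ≤ 1 := by
      rw [Real.exp_le_one_iff]
      nlinarith [ht.1]
    have hexp0 : 0 < Real.exp (-(c + lam) * t) := Real.exp_pos _
    have hI := abs_Inn_le (F := F) hp ha hδ hFpos hB hb ht'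
    have h0 : 0 ≤ B + Ca n p a δ := add_nonneg hB (Ca_nonneg hp ha hδ)
    rw [Real.norm_eq_abs, abs_mul, abs_mul, abs_of_pos hlam, abs_of_pos hexp0]
    calc lam * Real.exp (-(c + lam) * t) * |Inn p a δ F w m t|
        ≤ lam * 1 * |Inn p a δ F w m t| :=
          mul_le_mul_of_nonneg_right (mul_le_mul_of_nonneg_left hexp hlam.le) (abs_nonneg _)
      _ = lam * |Inn p a δ F w m t| := by ring
      _ ≤ lam * (B + Ca n p a δ) := mul_le_mul_of_nonneg_left hI hlam.le

lemma Idel_mono [IsProbabilityMeasure F]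
    (hp : ∀ i, 0 < p i) (ha : ∀ i, 0 < a i)
    (hlam : 0 < lam) (hc : 0 < c) (hδ : 0 < δ)
    (hFpos : F {α | ¬ 0 ≤ α} = 0)
    {w w' : (Fin n → ℕ) → ℝ} (h : ∀ k, w k ≤ w' k) (m : Fin n → ℕ) :
    Idel n p a lam c δ F w m ≤ Idel n p a lam c δ F w' m := by
  rw [Idel_eq, Idel_eq]
  apply intervalIntegral.integral_mono_on hδ.le
  · exact outer_intervalIntegrable hp ha hlam hc hδ hFpos
      (le_trans (abs_nonneg _) (Finset.le_sup' (fun k => |w k|) (Kset_nonempty m).choose_spec))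
      (fun k hk => Finset.le_sup' (fun k => |w k|) hk)
  · exact outer_intervalIntegrable hp ha hlam hc hδ hFpos
      (le_trans (abs_nonneg _) (Finset.le_sup' (fun k => |w' k|) (Kset_nonempty m).choose_spec))
      (fun k hk => Finset.le_sup' (fun k => |w' k|) hk)
  · intro t ht
    exact mul_le_mul_of_nonneg_left (Inn_mono hp ha hδ hFpos h m ht)
      (mul_pos hlam (Real.exp_pos _)).le

lemma tendsto_Inn [IsProbabilityMeasure F]
    (hp : ∀ i, 0 < p i) (ha : ∀ i, 0 < a i) (hδ : 0 < δ)
    (hFpos : F {α | ¬ 0 ≤ α} = 0)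
    {W : ℕ → (Fin n → ℕ) → ℝ} {W0 : (Fin n → ℕ) → ℝ} {m : Fin n → ℕ} {B : ℝ}
    (hb : ∀ l, ∀ k ∈ Kset n m, |W l k| ≤ B)
    (hconv : ∀ k, Tendsto (fun l => W l k) atTop (nhds (W0 k)))
    {t : ℝ} (ht : t ∈ Set.Icc 0 δ) :
    Tendsto (fun l => Inn p a δ F (W l) m t) atTop (nhds (Inn p a δ F W0 m t)) := by
  apply tendsto_integral_of_dominated_convergence (fun _ => B + Ca n p a δ)
  · intro l
    exact (((measurable_bodyq p a δ (W l) m).comp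
      (measurable_prodMk_left (x := t)))).aestronglyMeasurable
  · exact integrable_const _
  · intro l
    filter_upwards [ae_restrict_of_ae (ae_nonneg hFpos),
      ae_restrict_mem (measurableSet_slice p δ m t)] with α h1 h2
    exact body_le hp ha hδ (hb l) ht h1 h2
  · filter_upwards with α
    exact Tendsto.add_const _ (hconv _)

lemma tendsto_Idel [IsProbabilityMeasure F]
    (hp : ∀ i, 0 < p i) (ha : ∀ i, 0 < a i)
    (hlam : 0 < lam) (hc : 0 < c) (hδ : 0 < δ)
    (hFpos : F {α | ¬ 0 ≤ α} = 0)
    {W : ℕ → (Fin n → ℕ) → ℝ} {W0 : (Fin n → ℕ) → ℝ} {m : Fin n → ℕ} {B : ℝ} (hB : 0 ≤ B)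
    (hb : ∀ l, ∀ k ∈ Kset n m, |W l k| ≤ B)
    (hconv : ∀ k, Tendsto (fun l => W l k) atTop (nhds (W0 k))) :
    Tendsto (fun l => Idel n p a lam c δ F (W l) m) atTop
      (nhds (Idel n p a lam c δ F W0 m)) := by
  simp only [Idel_eq]
  apply intervalIntegral.tendsto_integral_filter_of_dominated_convergence
    (fun _ => lam * (B + Ca n p a δ))
  · filter_upwards with l
    exact (((measurable_const.mul
      ((Real.measurable_exp.comp (measurable_id.const_mul _)))).mul
      (measurable_Inn p a δ F (W l) m))).aestronglyMeasurable.restrict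
  · filter_upwards with l
    filter_upwards with t ht
    rw [Set.uIoc_of_le hδ.le] at ht
    have ht' : t ∈ Set.Icc 0 δ := ⟨ht.1.le, ht.2⟩
    have hexp : Real.exp (-(c + lam) * t) ≤ 1 := by
      rw [Real.exp_le_one_iff]; nlinarith [ht.1]
    have hexp0 : 0 < Real.exp (-(c + lam) * t) := Real.exp_pos _
    have hI := abs_Inn_le (F := F) hp ha hδ hFpos hB (hb l) ht'
    have h0 : 0 ≤ B + Ca n p a δ := add_nonneg hB (Ca_nonneg hp ha hδ)
    rw [Real.norm_eq_abs, abs_mul, abs_mul, abs_of_pos hlam, abs_of_pos hexp0]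
    calc lam * Real.exp (-(c + lam) * t) * |Inn p a δ F (W l) m t|
        ≤ lam * 1 * |Inn p a δ F (W l) m t| :=
          mul_le_mul_of_nonneg_right (mul_le_mul_of_nonneg_left hexp hlam.le) (abs_nonneg _)
      _ = lam * |Inn p a δ F (W l) m t| := by ring
      _ ≤ lam * (B + Ca n p a δ) := mul_le_mul_of_nonneg_left hI hlam.le
  · exact intervalIntegrable_const
  · filter_upwards with t ht
    rw [Set.uIoc_of_le hδ.le] at ht
    exact Tendsto.const_mul _ (tendsto_Inn hp ha hδ hFpos hb hconv ⟨ht.1.le, ht.2⟩)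

end Outer
section TbellAux
variable {n : ℕ} (p a : Fin n → ℝ) (lam c δ : ℝ) (F : Measure (Fin n → ℝ))
  (υ : (Fin n → ℝ) → (Fin n → ℝ) → ℝ) (f : (Fin n → ℝ) → ℝ)

def evalT (w : (Fin n → ℕ) → ℝ) (m : Fin n → ℕ) : Bool ⊕ Fin n → ℝ :=
  Sum.elim (fun b => if b then T0 n p a lam c δ F υ w m else Ts n p δ f w m)
    (fun i => Ti n p a δ i w m)

def Ofin (m : Fin n → ℕ) : Finset (Bool ⊕ Fin n) :=
  {Sum.inl true, Sum.inl false} ∪ (Finset.univ.filter fun i => 0 < m i).image Sum.inr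

lemma Ofin_nonempty (m : Fin n → ℕ) : (Ofin (n := n) m).Nonempty :=
  ⟨Sum.inl true, by simp [Ofin]⟩

lemma Tset_eq (w : (Fin n → ℕ) → ℝ) (m : Fin n → ℕ) :
    ({T0 n p a lam c δ F υ w m, Ts n p δ f w m} ∪
      (fun i => Ti n p a δ i w m) '' {i | 0 < m i})
      = evalT p a lam c δ F υ f w m '' ↑(Ofin m) := by
  ext x
  constructor
  · intro hx
    rcases hx with hx | ⟨i, hi, rfl⟩
    · rcases Set.mem_insert_iff.mp hx with hx | hx
      · exact ⟨Sum.inl true, by simp [Ofin], by simp [evalT, hx]⟩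
      · exact ⟨Sum.inl false, by simp [Ofin],
          by simp [evalT, Set.mem_singleton_iff.mp hx]⟩
    · exact ⟨Sum.inr i, by simp only [Ofin]; simp; exact hi, rfl⟩
  · rintro ⟨o, ho, rfl⟩
    cases o with
    | inl b =>
      cases b
      · exact Set.mem_union_left _ (Set.mem_insert_of_mem _ (by simp [evalT]))
      · exact Set.mem_union_left _ (by simp [evalT])
    | inr i =>
      have hi : 0 < m i := by simpa [Ofin] using ho
      exact Set.mem_union_right _ ⟨i, hi, rfl⟩

lemma Tbell_eq_sup' (w : (Fin n → ℕ) → ℝ) (m : Fin n → ℕ) :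
    Tbell n p a lam c δ F υ f w m
      = (Ofin m).sup' (Ofin_nonempty m) (evalT p a lam c δ F υ f w m) := by
  rw [Tbell, Tset_eq, Finset.sup'_eq_csSup_image]

lemma le_Tbell (w : (Fin n → ℕ) → ℝ) (m : Fin n → ℕ) {o : Bool ⊕ Fin n}
    (ho : o ∈ Ofin m) :
    evalT p a lam c δ F υ f w m o ≤ Tbell n p a lam c δ F υ f w m := by
  rw [Tbell_eq_sup']
  exact Finset.le_sup' _ ho

lemma Ts_le_Tbell (w : (Fin n → ℕ) → ℝ) (m : Fin n → ℕ) :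
    f (gdel n p δ m) ≤ Tbell n p a lam c δ F υ f w m := by
  have := le_Tbell p a lam c δ F υ f w m (o := Sum.inl false) (by simp [Ofin])
  simpa only [evalT, Sum.elim_inl, if_neg Bool.false_ne_true, Ts] using this

lemma tendsto_finset_sup' {ι : Type*} {s : Finset ι} (hs : s.Nonempty)
    {g : ℕ → ι → ℝ} {G : ι → ℝ} :
    (∀ i ∈ s, Tendsto (fun l => g l i) atTop (nhds (G i))) →
    Tendsto (fun l => s.sup' hs (g l)) atTop (nhds (s.sup' hs G)) := by
  induction hs using Finset.Nonempty.cons_induction with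
  | singleton a => intro h; simpa using h a (by simp)
  | cons a s ha hs ih =>
    intro h
    simp only [Finset.sup'_cons hs]
    exact (h a (by simp)).max (ih fun i hi => h i (by simp [hi]))

end TbellAux

section TbellMain
variable {n : ℕ} {p a : Fin n → ℝ} {lam c δ : ℝ} {F : Measure (Fin n → ℝ)}
  {υ : (Fin n → ℝ) → (Fin n → ℝ) → ℝ} {f : (Fin n → ℝ) → ℝ}

lemma Tbell_mono [IsProbabilityMeasure F]
    (hp : ∀ i, 0 < p i) (ha : ∀ i, 0 < a i)
    (hlam : 0 < lam) (hc : 0 < c) (hδ : 0 < δ)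
    (hFpos : F {α | ¬ 0 ≤ α} = 0)
    {w w' : (Fin n → ℕ) → ℝ} (h : ∀ k, w k ≤ w' k) (m : Fin n → ℕ) :
    Tbell n p a lam c δ F υ f w m ≤ Tbell n p a lam c δ F υ f w' m := by
  rw [Tbell_eq_sup', Tbell_eq_sup']
  apply Finset.sup'_le
  intro o ho
  refine le_trans ?_ (Finset.le_sup' _ ho)
  cases o with
  | inl b =>
    cases b
    · simp only [evalT, Sum.elim_inl, if_neg Bool.false_ne_true]
      exact le_rfl
    · simp only [evalT, Sum.elim_inl, eq_self_iff_true, if_true, T0]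
      have h1 : w (m + 1) * Real.exp (-(c + lam) * δ) ≤ w' (m + 1) * Real.exp (-(c + lam) * δ) :=
        mul_le_mul_of_nonneg_right (h _) (Real.exp_pos _).le
      have h2 := Idel_mono (F := F) hp ha hlam hc hδ hFpos h m
      linarith
  | inr i =>
    simp only [evalT, Sum.elim_inr, Ti]
    exact add_le_add_left (h _) _

lemma tendsto_Tbell [IsProbabilityMeasure F]
    (hp : ∀ i, 0 < p i) (ha : ∀ i, 0 < a i)
    (hlam : 0 < lam) (hc : 0 < c) (hδ : 0 < δ)
    (hFpos : F {α | ¬ 0 ≤ α} = 0)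
    {W : ℕ → (Fin n → ℕ) → ℝ} {W0 : (Fin n → ℕ) → ℝ} {m : Fin n → ℕ} {B : ℝ} (hB : 0 ≤ B)
    (hb : ∀ l, ∀ k ∈ Kset n m, |W l k| ≤ B)
    (hconv : ∀ k, Tendsto (fun l => W l k) atTop (nhds (W0 k))) :
    Tendsto (fun l => Tbell n p a lam c δ F υ f (W l) m) atTop
      (nhds (Tbell n p a lam c δ F υ f W0 m)) := by
  simp only [Tbell_eq_sup']
  apply tendsto_finset_sup' (Ofin_nonempty m)
  intro o ho
  cases o with
  | inl b =>
    cases b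
    · simp only [evalT, Sum.elim_inl, if_neg Bool.false_ne_true, Ts]
      exact tendsto_const_nhds
    · simp only [evalT, Sum.elim_inl, eq_self_iff_true, if_true, T0]
      exact (((hconv (m + 1)).mul_const _).add
        (tendsto_Idel hp ha hlam hc hδ hFpos hB hb hconv)).sub_const _
  | inr i =>
    simp only [evalT, Sum.elim_inr, Ti]
    exact (hconv _).add_const _

end TbellMain

/-- if a discrete supersolution exists, the value-iteration limit `w₀` exists,
is a fixed point of `T`, and is the smallest discrete supersolution. -/
theorem stmt3 (n : ℕ) (hn : 1 ≤ n) (p a : Fin n → ℝ)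
    (hp : ∀ i, 0 < p i) (ha : ∀ i, 0 < a i)
    (lam c δ : ℝ) (hlam : 0 < lam) (hc : 0 < c) (hδ : 0 < δ)
    (F : Measure (Fin n → ℝ)) [IsProbabilityMeasure F]
    (hFpos : F {α | ¬ 0 ≤ α} = 0) (hF0 : F {0} = 0)
    (hFmom : Integrable (fun α => ‖α‖) F)
    (υ : (Fin n → ℝ) → (Fin n → ℝ) → ℝ) (hυmeas : Measurable (Function.uncurry υ))
    (hυint : Integrable (fun α => |υ 0 α|) F)
    (hRcont : ContinuousOn (Rpen n lam F υ) {x | 0 ≤ x})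
    (f : (Fin n → ℝ) → ℝ)
    (hexists : ∃ w : (Fin n → ℕ) → ℝ, ∀ m, Tbell n p a lam c δ F υ f w m ≤ w m)
    (v : ℕ → (Fin n → ℕ) → ℝ)
    (hv1 : ∀ m, v 1 m = f (gdel n p δ m))
    (hvrec : ∀ l, 1 ≤ l → v (l + 1) = Tbell n p a lam c δ F υ f (v l)) :
    ∃ w₀ : (Fin n → ℕ) → ℝ,
      (∀ m, Tendsto (fun l => v l m) atTop (nhds (w₀ m))) ∧
      (∀ m, Tbell n p a lam c δ F υ f w₀ m = w₀ m) ∧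
      (∀ w : (Fin n → ℕ) → ℝ, (∀ m, Tbell n p a lam c δ F υ f w m ≤ w m) →
        ∀ m, w₀ m ≤ w m) := by
  obtain ⟨ws, hws⟩ := hexists
  -- any supersolution dominates every iterate
  have hdom : ∀ w : (Fin n → ℕ) → ℝ, (∀ m, Tbell n p a lam c δ F υ f w m ≤ w m) →
      ∀ l m, v (l + 1) m ≤ w m := by
    intro w hw l
    induction l with
    | zero =>
      intro m
      rw [hv1 m]
      exact le_trans (Ts_le_Tbell p a lam c δ F υ f w m) (hw m)
    | succ l ih =>
      intro m
      rw [hvrec (l + 1) (by omega)]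
      exact le_trans (Tbell_mono hp ha hlam hc hδ hFpos ih m) (hw m)
  -- monotonicity of the iterates
  have hmono : ∀ l m, v (l + 1) m ≤ v (l + 2) m := by
    intro l
    induction l with
    | zero =>
      intro m
      rw [hvrec 1 le_rfl, hv1 m]
      exact Ts_le_Tbell p a lam c δ F υ f (v 1) m
    | succ l ih =>
      intro m
      rw [hvrec (l + 1) (by omega), hvrec (l + 2) (by omega)]
      exact Tbell_mono hp ha hlam hc hδ hFpos ih m
  have hlow : ∀ l m, v 1 m ≤ v (l + 1) m := by
    intro l
    induction l with
    | zero => intro m; exact le_rfl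
    | succ l ih => intro m; exact le_trans (ih m) (hmono l m)
  have hub : ∀ l m, v (l + 1) m ≤ ws m := hdom ws hws
  -- the limit function
  set w₀ : (Fin n → ℕ) → ℝ := fun m => ⨆ l, v (l + 1) m with hw₀
  have hBdd : ∀ m, BddAbove (Set.range fun l => v (l + 1) m) := by
    intro m
    exact ⟨ws m, by rintro x ⟨l, rfl⟩; exact hub l m⟩
  have htend' : ∀ m, Tendsto (fun l => v (l + 1) m) atTop (nhds (w₀ m)) := by
    intro m
    exact tendsto_atTop_ciSup (monotone_nat_of_le_succ fun l => hmono l m) (hBdd m)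
  have htend : ∀ m, Tendsto (fun l => v l m) atTop (nhds (w₀ m)) := by
    intro m
    exact (tendsto_add_atTop_iff_nat 1).mp (htend' m)
  -- uniform bounds on the window Kset
  have hbound : ∀ m : Fin n → ℕ, ∃ B : ℝ, 0 ≤ B ∧ ∀ l, ∀ k ∈ Kset n m, |v (l + 1) k| ≤ B := by
    intro m
    refine ⟨(Kset n m).sup' (Kset_nonempty m) fun k => max |v 1 k| |ws k|, ?_, ?_⟩
    · obtain ⟨k, hk⟩ := Kset_nonempty m
      refine le_trans ?_ (Finset.le_sup' (fun k => max |v 1 k| |ws k|) hk)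
      exact le_trans (abs_nonneg _) (le_max_left _ _)
    · intro l k hk
      refine le_trans ?_ (Finset.le_sup' (fun k => max |v 1 k| |ws k|) hk)
      have h1 := hlow l k
      have h2 := hub l k
      have h3 := neg_abs_le (v 1 k)
      have h4 := le_abs_self (ws k)
      have h5 := le_max_left |v 1 k| |ws k|
      have h6 := le_max_right |v 1 k| |ws k|
      rw [abs_le]
      constructor <;> linarith
  -- fixed point
  have hfix : ∀ m, Tbell n p a lam c δ F υ f w₀ m = w₀ m := by
    intro m
    obtain ⟨B, hB, hb⟩ := hbound m
    have h2 : Tendsto (fun l => Tbell n p a lam c δ F υ f (v (l + 1)) m) atTop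
        (nhds (Tbell n p a lam c δ F υ f w₀ m)) :=
      tendsto_Tbell hp ha hlam hc hδ hFpos hB hb fun k => htend' k
    have h1 : Tendsto (fun l => v (l + 2) m) atTop (nhds (w₀ m)) :=
      (tendsto_add_atTop_iff_nat 1).mpr (htend' m)
    have heq : (fun l => v (l + 2) m) = fun l => Tbell n p a lam c δ F υ f (v (l + 1)) m := by
      funext l
      rw [hvrec (l + 1) (by omega)]
    rw [heq] at h1
    exact tendsto_nhds_unique h2 h1
  refine ⟨w₀, htend, hfix, ?_⟩
  intro w hw m
  exact le_of_tendsto (htend' m) (Eventually.of_forall fun l => hdom w hw l m)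

end
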